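/- arXiv:2602.12680 — 4 statements merged into one kernel-verified Lean document; each statement's English description precedes it below -/
import Mathlib

section
/- Let $d \ge 1$, let $x \in \mathbb{R}^d$ have pairwise distinct squared entries ($x_j^2 \neq x_k^2$ for $j \neq k$) with all $x_j \neq 0$, let $Y \in \mathbb{R}$ with $Y \neq 0$, and let $I = \arg\max_j |x_j|$, so $\|x\|_\infty = |x_I|$. Define $\bar{\mathcal{F}}(\tau) = \log(2\tau) + \log\|x\|_\infty + \frac{|Y|}{\|x\|_\infty \tau} - \log\prod_{j=1, j\neq I}^d \frac{x_I^2}{x_I^2 - x_j^2}$ for $\tau > 0$. Then $\bar{\mathcal{F}}$ attains its infimum over $\tau > 0$ uniquely at $\tau^* = \frac{|Y|}{\|x\|_\infty}$, and $2\bar{\mathcal{F}}(\tau^*) = 2\log\frac{|Y|}{\|x\|_\infty} - 2\log\Big(\frac{1}{2\|x\|_\infty}\prod_{j=1, j\neq I}^d \frac{x_I^2}{x_I^2 - x_j^2}\Big) + 2$; moreover $\frac{|Y|}{\|x\|_\infty} = \|\theta^*\|_1$ where $\theta^*$ is the minimum $\ell^1$-norm solution of $x\cdot\theta = Y$. -/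
open Real

/-- IIC for the minimum `ℓ¹`-norm interpolator with a single
observation (`n = 1`).  Here `x ∈ ℝᵈ` has nonzero entries with pairwise distinct
squares, `Y ≠ 0`, and `I = argmax_j |x_j|` so `‖x‖_∞ = |x_I|`.  The free energy
`F(τ) = log(2τ) + log‖x‖_∞ + |Y|/(‖x‖_∞ τ) - log ∏_{j ≠ I} x_I²/(x_I² - x_j²)`
attains its infimum over `τ > 0` uniquely at `τ* = |Y|/‖x‖_∞`, with
`2F(τ*) = 2 log(|Y|/‖x‖_∞) - 2 log((1/(2‖x‖_∞)) ∏_{j≠I} x_I²/(x_I²-x_j²)) + 2`;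
moreover `|Y|/‖x‖_∞` is the minimum of `‖θ‖₁` over `{θ : x·θ = Y}`. -/
theorem iic_ell1_single_obs (d : ℕ) (hd : 1 ≤ d) (x : Fin d → ℝ)
    (hxnz : ∀ j, x j ≠ 0)
    (hdist : ∀ j k, j ≠ k → (x j) ^ 2 ≠ (x k) ^ 2)
    (Y : ℝ) (hY : Y ≠ 0)
    (I : Fin d) (hI : ∀ j, |x j| ≤ |x I|)
    (F : ℝ → ℝ)
    (hF : ∀ τ : ℝ, F τ = Real.log (2 * τ) + Real.log |x I|
        + |Y| / (|x I| * τ)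
        - Real.log (∏ j ∈ Finset.univ.erase I, (x I) ^ 2 / ((x I) ^ 2 - (x j) ^ 2))) :
    (∀ τ : ℝ, 0 < τ → F (|Y| / |x I|) ≤ F τ) ∧
    (∀ τ : ℝ, 0 < τ → F τ = F (|Y| / |x I|) → τ = |Y| / |x I|) ∧
    2 * F (|Y| / |x I|)
      = 2 * Real.log (|Y| / |x I|)
        - 2 * Real.log ((1 / (2 * |x I|))
            * ∏ j ∈ Finset.univ.erase I, (x I) ^ 2 / ((x I) ^ 2 - (x j) ^ 2))
        + 2 ∧
    IsLeast ((fun θ : Fin d → ℝ => ∑ j, |θ j|) '' {θ | ∑ j, x j * θ j = Y})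
      (|Y| / |x I|) := by
  have hxI : (0:ℝ) < |x I| := abs_pos.mpr (hxnz I)
  have hYpos : (0:ℝ) < |Y| := abs_pos.mpr hY
  set τ0 : ℝ := |Y| / |x I| with hτ0def
  have hτ0 : 0 < τ0 := div_pos hYpos hxI
  have hden : |x I| * τ0 = |Y| := by
    rw [hτ0def, mul_div_cancel₀ _ (ne_of_gt hxI)]
  have hone : |Y| / (|x I| * τ0) = 1 := by
    rw [hden, div_self (ne_of_gt hYpos)]
  have key : ∀ τ : ℝ, 0 < τ →
      F τ - F τ0 = (τ0 / τ - 1) - Real.log (τ0 / τ) := by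
    intro τ hτ
    have h1 : Real.log (2 * τ) = Real.log 2 + Real.log τ :=
      Real.log_mul two_ne_zero (ne_of_gt hτ)
    have h2 : Real.log (2 * τ0) = Real.log 2 + Real.log τ0 :=
      Real.log_mul two_ne_zero (ne_of_gt hτ0)
    have h3 : |Y| / (|x I| * τ) = τ0 / τ := by
      rw [hτ0def, div_div]
    have h4 : Real.log (τ0 / τ) = Real.log τ0 - Real.log τ :=
      Real.log_div (ne_of_gt hτ0) (ne_of_gt hτ)
    rw [hF, hF, h1, h2, h3, hone, h4]
    ring
  refine ⟨?_, ?_, ?_, ?_⟩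
  · intro τ hτ
    have hk := key τ hτ
    have hlog : Real.log (τ0 / τ) ≤ τ0 / τ - 1 :=
      Real.log_le_sub_one_of_pos (div_pos hτ0 hτ)
    linarith
  · intro τ hτ heq
    by_contra hne
    have hk := key τ hτ
    have hne1 : τ0 / τ ≠ 1 := by
      intro h
      exact hne ((div_eq_one_iff_eq (ne_of_gt hτ)).mp h).symm
    have hlog : Real.log (τ0 / τ) < τ0 / τ - 1 :=
      Real.log_lt_sub_one_of_pos (div_pos hτ0 hτ) hne1
    rw [heq] at hk
    simp at hk
    linarith
  · have hP : (0:ℝ) < ∏ j ∈ Finset.univ.erase I,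
        (x I) ^ 2 / ((x I) ^ 2 - (x j) ^ 2) := by
      apply Finset.prod_pos
      intro j hj
      have hjI : j ≠ I := Finset.ne_of_mem_erase hj
      have hle : (x j) ^ 2 ≤ (x I) ^ 2 := by
        have := hI j
        calc (x j)^2 = |x j|^2 := (sq_abs _).symm
          _ ≤ |x I|^2 := by nlinarith [abs_nonneg (x j)]
          _ = (x I)^2 := sq_abs _
      have hlt : (x j) ^ 2 < (x I) ^ 2 :=
        lt_of_le_of_ne hle (hdist j I hjI)
      exact div_pos (sq_abs (x I) ▸ pow_pos hxI 2) (by linarith)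
    set P := ∏ j ∈ Finset.univ.erase I, (x I) ^ 2 / ((x I) ^ 2 - (x j) ^ 2)
    have h1 : Real.log (2 * τ0) = Real.log 2 + Real.log τ0 :=
      Real.log_mul two_ne_zero (ne_of_gt hτ0)
    have h2 : Real.log ((1 / (2 * |x I|)) * P)
        = -(Real.log 2 + Real.log |x I|) + Real.log P := by
      rw [Real.log_mul (by positivity) (ne_of_gt hP), one_div,
        Real.log_inv, Real.log_mul two_ne_zero (ne_of_gt hxI)]
    rw [hF, hone, h1, h2]
    ring
  · constructor
    · refine ⟨(Pi.single I (Y / x I) : Fin d → ℝ), ?_, ?_⟩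
      · simp only [Set.mem_setOf_eq]
        rw [Finset.sum_eq_single I]
        · simp [mul_div_cancel₀ _ (hxnz I)]
        · intro j _ hj
          simp [Pi.single_apply, hj]
        · simp
      · simp only []
        rw [Finset.sum_eq_single I]
        · simp [abs_div]
          exact hτ0def.symm
        · intro j _ hj
          simp [Pi.single_apply, hj]
        · simp
    · rintro v ⟨θ, hθ, rfl⟩
      simp only [Set.mem_setOf_eq] at hθ
      have h1 : |Y| ≤ |x I| * ∑ j, |θ j| := by
        calc |Y| = |∑ j, x j * θ j| := by rw [hθ]
          _ ≤ ∑ j, |x j * θ j| := Finset.abs_sum_le_sum_abs _ _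
          _ ≤ ∑ j, |x I| * |θ j| := by
              apply Finset.sum_le_sum
              intro j _
              rw [abs_mul]
              exact mul_le_mul_of_nonneg_right (hI j) (abs_nonneg _)
          _ = |x I| * ∑ j, |θ j| := (Finset.mul_sum _ _ _).symm
      exact (div_le_iff₀' hxI).mpr h1
end

section
/- Let $X \in \mathbb{R}^{n \times d}$ with $d \ge n$ have full row rank, let $Y \in \mathbb{R}^n$, and let $R : \mathbb{R}^d \to \mathbb{R}$ be convex with a unique global minimizer $\theta^*$ over the affine set $\{\theta : X\theta = Y\}$. For $z \in \ker X$, let $\nabla_z R(\theta^*) = \lim_{t \to 0^+} \frac{R(\theta^* + tz) - R(\theta^*)}{t}$ denote the one-sided directional derivative. Suppose $V = \int_{\ker X} \exp\{-\nabla_z R(\theta^*)\}\,\mathrm{d}\mathcal{H}^{d-n}(z)$ is finite. Then $\lim_{\tau \to 0^+}\, \tau^{-(d-n)}\, e^{R(\theta^*)/\tau} \int_{\ker X} e^{-R(\theta^* + v)/\tau}\,\mathrm{d}\mathcal{H}^{d-n}(v) = V$; equivalently, $\int_{X\theta=Y} e^{-R(\theta)/\tau}\,\mathrm{d}\mathcal{H}^{d-n}(\theta)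 \sim \tau^{d-n}\, V\, e^{-R(\theta^*)/\tau}$ as $\tau \to 0^+$. -/
open Real MeasureTheory Filter
open scoped ENNReal NNReal Pointwise

/-- Non-smooth Laplace asymptotics on the interpolating fiber.
`R` convex with unique minimizer `θ*` over `{θ : Xθ = Y}`, `D z` the one-sided
directional derivative of `R` at `θ*` in direction `z ∈ ker X`, and
`V = ∫_{ker X} e^{-D z} dH^{d-n}(z)` finite.  Then
`τ^{-(d-n)} e^{R(θ*)/τ} ∫_{ker X} e^{-R(θ*+v)/τ} dH^{d-n}(v) → V` as `τ → 0⁺`. -/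
theorem nonsmooth_laplace_interpolating_fiber (n d : ℕ) (hnd : n ≤ d)
    (X : Matrix (Fin n) (Fin d) ℝ) (hrank : X.rank = n) (Y : Fin n → ℝ)
    (R : EuclideanSpace ℝ (Fin d) → ℝ)
    (hconv : ConvexOn ℝ Set.univ R)
    (θs : EuclideanSpace ℝ (Fin d)) (hθs : X.mulVec θs = Y)
    (hmin : ∀ θ : EuclideanSpace ℝ (Fin d), X.mulVec θ = Y → θ ≠ θs → R θs < R θ)
    (D : EuclideanSpace ℝ (Fin d) → ℝ)
    (hD : ∀ z : EuclideanSpace ℝ (Fin d), X.mulVec z = 0 →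
      Filter.Tendsto (fun t : ℝ => (R (θs + t • z) - R θs) / t)
        (nhdsWithin 0 (Set.Ioi 0)) (nhds (D z)))
    (hV : IntegrableOn (fun z => Real.exp (-D z))
      {z : EuclideanSpace ℝ (Fin d) | X.mulVec z = 0} μH[((d : ℝ) - n)]) :
    Filter.Tendsto
      (fun τ : ℝ => τ ^ (-((d : ℝ) - n)) * Real.exp (R θs / τ) *
        ∫ v in {z : EuclideanSpace ℝ (Fin d) | X.mulVec z = 0},
          Real.exp (-R (θs + v) / τ) ∂μH[((d : ℝ) - n)])
      (nhdsWithin 0 (Set.Ioi 0))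
      (nhds (∫ z in {z : EuclideanSpace ℝ (Fin d) | X.mulVec z = 0},
        Real.exp (-D z) ∂μH[((d : ℝ) - n)])) := by
  set s : ℝ := (d : ℝ) - n with hs_def
  have hs : 0 ≤ s := by
    simp only [hs_def, sub_nonneg]
    exact_mod_cast hnd
  set S : Set (EuclideanSpace ℝ (Fin d)) := {z | X.mulVec z = 0} with hS_def
  have hRcont : Continuous R := by
    rw [← continuousOn_univ]
    exact hconv.continuousOn isOpen_univ
  have hXcont : Continuous (fun z : EuclideanSpace ℝ (Fin d) => X.mulVec z) :=
    LinearMap.continuous_of_finiteDimensional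
      (X.mulVecLin.comp (WithLp.linearEquiv 2 ℝ (Fin d → ℝ)).toLinearMap)
  have hSclosed : IsClosed S := isClosed_eq hXcont continuous_const
  have hSmeas : MeasurableSet S := hSclosed.measurableSet
  -- convexity of the restriction to a line through θs
  have hline : ∀ z : EuclideanSpace ℝ (Fin d),
      ConvexOn ℝ Set.univ (fun t : ℝ => R (θs + t • z)) := by
    intro z
    have := hconv.comp_affineMap (AffineMap.lineMap θs (θs + z))
    have heq : (R ∘ (AffineMap.lineMap θs (θs + z))) = fun t : ℝ => R (θs + t • z) := by
      funext t
      simp [AffineMap.lineMap_apply, add_sub_cancel_left, add_comm]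
    rw [heq] at this
    simpa using this
  -- key monotone slope bound: for τ > 0 and z, D z ≤ slope
  have hslope : ∀ z ∈ S, ∀ τ : ℝ, 0 < τ → D z ≤ (R (θs + τ • z) - R θs) / τ := by
    intro z hz τ hτ
    refine le_of_tendsto (hD z hz) ?_
    filter_upwards [Ioc_mem_nhdsGT hτ] with t ht
    have := (hline z).secant_mono (Set.mem_univ (0:ℝ)) (Set.mem_univ t) (Set.mem_univ τ)
      ht.1.ne' hτ.ne' ht.2
    simpa using this
  -- change of variables: pushforward of Hausdorff measure under scaling
  have hmap : ∀ τ : ℝ, 0 < τ →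
      Measure.map (fun z : EuclideanSpace ℝ (Fin d) => τ • z) μH[s]
        = ((‖τ⁻¹‖₊ : ℝ≥0∞) ^ s) • μH[s] := by
    intro τ hτ
    ext A hA
    rw [Measure.map_apply (by fun_prop) hA]
    have h : (fun z : EuclideanSpace ℝ (Fin d) => τ • z) ⁻¹' A = τ⁻¹ • A := by
      rw [Set.preimage_smul₀ hτ.ne']
    rw [h, Measure.hausdorffMeasure_smul₀ hs (inv_ne_zero hτ.ne') A]
    rw [Measure.smul_apply, ENNReal.smul_def, ENNReal.coe_rpow_of_nonneg _ hs]
  -- change of variables for set integrals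
  have hcov : ∀ τ : ℝ, 0 < τ → ∀ g : EuclideanSpace ℝ (Fin d) → ℝ, Continuous g →
      ∫ z in S, g (τ • z) ∂μH[s] = τ ^ (-s) * ∫ v in S, g v ∂μH[s] := by
    intro τ hτ g hg
    have hpre : (fun z : EuclideanSpace ℝ (Fin d) => τ • z) ⁻¹' S = S := by
      ext z
      have hms : X.mulVec (τ • z) = τ • X.mulVec z := Matrix.mulVec_smul X τ z
      simp only [Set.mem_preimage, hS_def, Set.mem_setOf_eq, WithLp.ofLp_smul, hms, smul_eq_zero,
        hτ.ne', false_or]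
    have hrestr : Measure.map (fun z => τ • z)
          ((μH[s] : Measure (EuclideanSpace ℝ (Fin d))).restrict S)
        = ((‖τ⁻¹‖₊ : ℝ≥0∞) ^ s) • (μH[s] : Measure (EuclideanSpace ℝ (Fin d))).restrict S := by
      rw [← hpre, ← Measure.restrict_map (by fun_prop) hSmeas, hpre, hmap τ hτ,
        Measure.restrict_smul]
    calc ∫ z in S, g (τ • z) ∂μH[s]
        = ∫ x, g x ∂(((μH[s] : Measure (EuclideanSpace ℝ (Fin d))).restrict S).map
            (fun z => τ • z)) := by
          rw [integral_map (by fun_prop) (hg.aestronglyMeasurable)]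
      _ = ((‖τ⁻¹‖₊ : ℝ≥0∞) ^ s).toReal * ∫ v in S, g v ∂μH[s] := by
          rw [hrestr, integral_smul_measure]; rfl
      _ = τ ^ (-s) * ∫ v in S, g v ∂μH[s] := by
          congr 1
          rw [← ENNReal.toReal_rpow]
          simp [Real.norm_eq_abs, abs_of_pos hτ, Real.rpow_neg hτ.le,
            Real.inv_rpow hτ.le]
  -- the function eventually equals the substituted integral
  have hkey : (fun τ : ℝ =>
      τ ^ (-s) * Real.exp (R θs / τ) * ∫ v in S, Real.exp (-R (θs + v) / τ) ∂μH[s])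
        =ᶠ[nhdsWithin (0:ℝ) (Set.Ioi 0)]
      (fun τ : ℝ => ∫ z in S, Real.exp (-((R (θs + τ • z) - R θs) / τ)) ∂μH[s]) := by
    filter_upwards [self_mem_nhdsWithin] with τ (hτ : τ ∈ Set.Ioi 0)
    have hg : Continuous (fun v => Real.exp (-R (θs + v) / τ)) := by fun_prop
    rw [mul_comm (τ ^ (-s)), mul_assoc, ← hcov τ hτ _ hg, ← integral_const_mul]
    congr 1
    funext z
    rw [← Real.exp_add]
    congr 1
    field_simp
    ring
  -- dominated convergence
  have hdc : Filter.Tendsto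
      (fun τ : ℝ => ∫ z in S, Real.exp (-((R (θs + τ • z) - R θs) / τ)) ∂μH[s])
      (nhdsWithin 0 (Set.Ioi 0))
      (nhds (∫ z in S, Real.exp (-D z) ∂μH[s])) := by
    apply tendsto_integral_filter_of_dominated_convergence (fun z => Real.exp (-D z))
    · filter_upwards with τ
      exact (Continuous.aestronglyMeasurable (by fun_prop))
    · filter_upwards [self_mem_nhdsWithin] with τ (hτ : τ ∈ Set.Ioi 0)
      refine (ae_restrict_mem hSmeas).mono fun z hz => ?_
      rw [Real.norm_eq_abs, Real.abs_exp, Real.exp_le_exp, neg_le_neg_iff]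
      exact hslope z hz τ hτ
    · exact hV
    · refine (ae_restrict_mem hSmeas).mono fun z hz => ?_
      exact (Real.continuous_exp.tendsto _).comp ((hD z hz).neg)
  exact hdc.congr' hkey.symm
end

section
/- Let $X \in \mathbb{R}^{n \times d}$, let $\theta^* \in \mathbb{R}^d$ be nonzero with support $S = \{j : \theta^*_j \neq 0\}$, complement $C = \{1,\dots,d\}\setminus S$, and sign vector $s = \mathrm{sgn}(\theta^*_S)$. Suppose the submatrix $X_S$ (the columns of $X$ indexed by $S$) has full column rank, and there exists $\mu \in \mathbb{R}^n$ with $X_S^\top\mu = s$ and $\|X_C^\top\mu\|_\infty < 1$. Then there exists a constant $\alpha > 0$ such that for all $z \in \ker X$, $\|z_C\|_1 + s \cdot z_S \ge \alpha\|z\|_1$. -/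
open Real

open Classical in
/-- Dual-certificate lower bound on the directional derivative of
the `ℓ¹` norm.  With `S = supp θ*`, `s = sgn(θ*_S)`, if the columns of `X` on `S`
are linearly independent and there is `μ` with `X_Sᵀμ = s`, `‖X_Cᵀμ‖_∞ < 1`, then
there is `α > 0` with `‖z_C‖₁ + s·z_S ≥ α ‖z‖₁` for all `z ∈ ker X`. -/
theorem ell1_directional_derivative_lower_bound (n d : ℕ)
    (X : Matrix (Fin n) (Fin d) ℝ) (θs : Fin d → ℝ) (hθs : θs ≠ 0)
    (hXS : LinearIndependent ℝ (fun j : {j : Fin d // θs j ≠ 0} => fun i => X i j.1))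
    (μ : Fin n → ℝ)
    (hcert : ∀ j, θs j ≠ 0 → ∑ i, X i j * μ i = Real.sign (θs j))
    (hstrict : ∀ j, θs j = 0 → |∑ i, X i j * μ i| < 1) :
    ∃ α > 0, ∀ z : Fin d → ℝ, X.mulVec z = 0 →
      α * ∑ j, |z j| ≤ ∑ j, if θs j = 0 then |z j| else Real.sign (θs j) * z j := by
  haveI hd : Nonempty (Fin d) := by
    by_contra h
    exact hθs (funext fun j => ((h ⟨j⟩).elim))
  set f : (Fin d → ℝ) → ℝ :=
    fun z => ∑ j, if θs j = 0 then |z j| else Real.sign (θs j) * z j with hf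
  set v : Fin d → ℝ := fun j => ∑ i, X i j * μ i with hv
  set g : Fin d → ℝ := fun j => if θs j = 0 then 1 - |v j| else 1 with hgdef
  have hg : ∀ j, 0 < g j := by
    intro j
    by_cases h : θs j = 0
    · simp only [hgdef, if_pos h]
      have := hstrict j h
      linarith
    · simp [hgdef, if_neg h]
  set β : ℝ := Finset.univ.inf' Finset.univ_nonempty g with hβdef
  have hβpos : 0 < β := by
    rw [hβdef, Finset.lt_inf'_iff]
    exact fun j _ => hg j
  have hβle : ∀ j, β ≤ g j := fun j => Finset.inf'_le _ (Finset.mem_univ j)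
  -- Claim A : the dual certificate bound
  have claimA : ∀ z : Fin d → ℝ, X.mulVec z = 0 →
      β * ∑ j, (if θs j = 0 then |z j| else 0) ≤ f z := by
    intro z hz
    have hsum0 : ∑ j, v j * z j = 0 := by
      have : ∑ j, v j * z j = ∑ i, μ i * X.mulVec z i := by
        simp only [hv, Matrix.mulVec, dotProduct, Finset.sum_mul, Finset.mul_sum]
        rw [Finset.sum_comm]
        apply Finset.sum_congr rfl
        intro i _
        apply Finset.sum_congr rfl
        intro j _
        ring
      rw [this, hz]
      simp
    have key : ∀ j, β * (if θs j = 0 then |z j| else 0) ≤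
        (if θs j = 0 then |z j| else Real.sign (θs j) * z j) - v j * z j := by
      intro j
      by_cases h : θs j = 0
      · simp only [if_pos h]
        have h1 : v j * z j ≤ |v j| * |z j| := by
          calc v j * z j ≤ |v j * z j| := le_abs_self _
            _ = |v j| * |z j| := abs_mul _ _
        have hβ := hβle j
        rw [hgdef] at hβ
        simp only [if_pos h] at hβ
        nlinarith [abs_nonneg (z j)]
      · simp only [if_neg h]
        have : v j = Real.sign (θs j) := hcert j h
        rw [this]
        simp [mul_nonneg hβpos.le]
    calc β * ∑ j, (if θs j = 0 then |z j| else 0)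
        = ∑ j, β * (if θs j = 0 then |z j| else 0) := Finset.mul_sum _ _ _
      _ ≤ ∑ j, ((if θs j = 0 then |z j| else Real.sign (θs j) * z j) - v j * z j) :=
          Finset.sum_le_sum fun j _ => key j
      _ = f z - ∑ j, v j * z j := by rw [Finset.sum_sub_distrib]
      _ = f z := by rw [hsum0]; ring
  -- Claim Z : kernel vectors vanishing on the complement are zero
  have claimZ : ∀ z : Fin d → ℝ, X.mulVec z = 0 → (∀ j, θs j = 0 → z j = 0) → z = 0 := by
    intro z hz hzC
    have hlin := Fintype.linearIndependent_iff.mp hXS (fun j => z j.1)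
    have hz' : ∑ j : {j : Fin d // θs j ≠ 0}, z j.1 • (fun i => X i j.1) = 0 := by
      funext i
      rw [Finset.sum_apply]
      simp only [Pi.smul_apply, smul_eq_mul, Pi.zero_apply]
      have h1 : ∑ j : {j : Fin d // θs j ≠ 0}, z j.1 * X i j.1
          = ∑ j ∈ Finset.univ.filter (fun j => θs j ≠ 0), z j * X i j := by
        exact (Finset.sum_subtype (Finset.univ.filter (fun j => θs j ≠ 0))
          (fun x => by simp) (fun j => z j * X i j)).symm
      rw [h1, Finset.sum_filter_of_ne]
      · have := congrFun hz i
        simp only [Matrix.mulVec, dotProduct, Pi.zero_apply] at this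
        rw [← this]
        apply Finset.sum_congr rfl
        intro j _
        ring
      · intro j _ hne h0
        exact hne (by rw [hzC j h0]; ring)
    funext j
    by_cases h : θs j = 0
    · exact hzC j h
    · exact hlin hz' ⟨j, h⟩
  -- Continuity of f
  have hfc : Continuous f := by
    apply continuous_finset_sum
    intro j _
    by_cases h : θs j = 0
    · simpa only [if_pos h] using (continuous_apply j).abs
    · simpa only [if_neg h] using
        (continuous_apply j : Continuous fun a : Fin d → ℝ => a j).const_mul (Real.sign (θs j))
  -- The constraint set
  set A : Set (Fin d → ℝ) := {z | X.mulVec z = 0 ∧ ∑ j, |z j| = 1} with hA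
  have hAclosed : IsClosed A := by
    have h1 : IsClosed {z : Fin d → ℝ | X.mulVec z = 0} :=
      isClosed_eq (X.mulVecLin.continuous_of_finiteDimensional) continuous_const
    have h2 : IsClosed {z : Fin d → ℝ | ∑ j, |z j| = 1} :=
      isClosed_eq (continuous_finset_sum _ fun j _ => (continuous_apply j).abs)
        continuous_const
    exact h1.inter h2
  have hAcompact : IsCompact A := by
    apply (isCompact_closedBall (0 : Fin d → ℝ) 1).of_isClosed_subset hAclosed
    intro z hz
    rw [Metric.mem_closedBall, dist_zero_right]
    rw [pi_norm_le_iff_of_nonneg (by norm_num)]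
    intro i
    rw [Real.norm_eq_abs]
    have h5 : |z i| ≤ ∑ j, |z j| :=
      Finset.single_le_sum (fun j _ => abs_nonneg (z j)) (Finset.mem_univ i)
    rw [hz.2] at h5
    exact h5
  -- positivity of f on A
  have hfposA : ∀ z ∈ A, 0 < f z := by
    intro z hzA
    rcases lt_or_ge 0 (f z) with h | h
    · exact h
    · exfalso
      have h1 := claimA z hzA.1
      have h2 : (0:ℝ) ≤ ∑ j, (if θs j = 0 then |z j| else 0) :=
        Finset.sum_nonneg fun j _ => by positivity
      have h3 : ∑ j, (if θs j = 0 then |z j| else 0) = 0 := by nlinarith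
      have h4 : ∀ j, θs j = 0 → z j = 0 := by
        intro j hj
        have := (Finset.sum_eq_zero_iff_of_nonneg (fun j _ => by positivity)).mp h3 j
          (Finset.mem_univ j)
        simp only [if_pos hj] at this
        exact abs_eq_zero.mp this
      have := claimZ z hzA.1 h4
      have h6 := hzA.2
      rw [this] at h6
      simp at h6
  -- homogeneity helper
  have hhomog : ∀ (t : ℝ) (z : Fin d → ℝ), 0 < t → f z = t * f (t⁻¹ • z) := by
    intro t z ht
    simp only [hf, Finset.mul_sum]
    apply Finset.sum_congr rfl
    intro j _
    by_cases h : θs j = 0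
    · simp only [if_pos h, Pi.smul_apply, smul_eq_mul, abs_mul, abs_inv, abs_of_pos ht]
      field_simp
    · simp only [if_neg h, Pi.smul_apply, smul_eq_mul]
      field_simp
  -- degenerate case helper
  have hzero : ∀ z : Fin d → ℝ, (∑ j, |z j| = 0) → ∀ α : ℝ,
      α * ∑ j, |z j| ≤ f z := by
    intro z hzs α
    have hz0 : ∀ j, z j = 0 := fun j => abs_eq_zero.mp <|
      (Finset.sum_eq_zero_iff_of_nonneg (fun j _ => abs_nonneg _)).mp hzs j (Finset.mem_univ j)
    rw [hzs]
    have : f z = 0 := by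
      apply Finset.sum_eq_zero
      intro j _
      rw [hz0 j]
      by_cases h : θs j = 0 <;> simp [h]
    rw [this]
    simp
  have hscale : ∀ z : Fin d → ℝ, 0 < ∑ j, |z j| →
      (∑ j, |(((∑ j, |z j|)⁻¹ • z) : Fin d → ℝ) j| = 1) := by
    intro z ht
    simp only [Pi.smul_apply, smul_eq_mul, abs_mul, abs_inv, abs_of_pos ht]
    rw [← Finset.mul_sum]
    field_simp
  by_cases hANe : A.Nonempty
  · obtain ⟨z₀, hz₀A, hmin⟩ := hAcompact.exists_isMinOn hANe hfc.continuousOn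
    refine ⟨f z₀, hfposA z₀ hz₀A, ?_⟩
    intro z hz
    set t := ∑ j, |z j| with htdef
    rcases (Finset.sum_nonneg fun j _ => abs_nonneg (z j) : (0:ℝ) ≤ t).eq_or_lt with
      h | ht
    · exact hzero z h.symm _
    · set w : Fin d → ℝ := t⁻¹ • z with hw
      have hwA : w ∈ A := by
        constructor
        · rw [hw, Matrix.mulVec_smul, hz]
          simp
        · exact hscale z ht
      have hfw := hmin hwA
      have := hhomog t z ht
      rw [hf] at *
      calc f z₀ * t = t * f z₀ := by ring
        _ ≤ t * f w := by
            apply mul_le_mul_of_nonneg_left _ ht.le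
            exact hfw
        _ = f z := (hhomog t z ht).symm
  · refine ⟨1, one_pos, ?_⟩
    intro z hz
    rcases (Finset.sum_nonneg fun j _ => abs_nonneg (z j) : (0:ℝ) ≤ ∑ j, |z j|).eq_or_lt with
      h | ht
    · exact hzero z h.symm _
    · exfalso
      apply hANe
      refine ⟨(∑ j, |z j|)⁻¹ • z, ?_, hscale z ht⟩
      rw [Matrix.mulVec_smul, hz]
      simp
end

section
/- Let $m \ge 1$ and let $\psi \in \mathbb{R}^m$ with $|\psi_k| < 1$ for every $k$. Then the Lebesgue measure of the set $\big\{z \in \mathbb{R}^m : \sum_{k=1}^m (|z_k| - \psi_k z_k) \le 1\big\}$ equals $\frac{2^m}{m!}\prod_{k=1}^m \frac{1}{1 - \psi_k^2}$. -/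
open Real MeasureTheory Set ENNReal

private lemma map_phi_aux (ψ : ℝ) (h : |ψ| < 1) :
    Measure.map (fun t : ℝ => |t| - ψ * t) volume
      = (ENNReal.ofReal ((1 - ψ)⁻¹ + (1 + ψ)⁻¹)) • volume.restrict (Set.Ici 0) := by
  obtain ⟨h1, h2⟩ := abs_lt.mp h
  have ha : (0:ℝ) < 1 - ψ := by linarith
  have hb : (0:ℝ) < 1 + ψ := by linarith
  have hmeas : Measurable (fun t : ℝ => |t| - ψ * t) := by fun_prop
  ext s hs
  rw [Measure.map_apply hmeas hs, Measure.smul_apply, Measure.restrict_apply hs, smul_eq_mul]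
  set P := (fun t : ℝ => |t| - ψ * t) ⁻¹' s with hP
  have hsplit : volume P = volume (P ∩ Ici 0) + volume (P ∩ Iio 0) := by
    rw [← measure_inter_add_diff P measurableSet_Ici]
    congr 1
    rw [← Set.compl_Ici (a := (0:ℝ)), ← Set.diff_eq]
  have e1 : P ∩ Ici 0 = (fun t : ℝ => (1 - ψ) * t) ⁻¹' (s ∩ Ici 0) := by
    ext t
    simp only [hP, Set.mem_inter_iff, Set.mem_preimage, Set.mem_Ici]
    constructor
    · rintro ⟨hts, ht⟩
      rw [abs_of_nonneg ht] at hts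
      refine ⟨by rw [sub_mul, one_mul]; exact hts, mul_nonneg ha.le ht⟩
    · rintro ⟨hts, ht⟩
      have ht' : 0 ≤ t := nonneg_of_mul_nonneg_right ht ha
      rw [abs_of_nonneg ht']
      exact ⟨by rw [sub_mul, one_mul] at hts; exact hts, ht'⟩
  have e2 : P ∩ Iio 0 = (fun t : ℝ => (-(1 + ψ)) * t) ⁻¹' (s ∩ Ioi 0) := by
    ext t
    simp only [hP, Set.mem_inter_iff, Set.mem_preimage, Set.mem_Iio, Set.mem_Ioi]
    constructor
    · rintro ⟨hts, ht⟩
      rw [abs_of_neg ht] at hts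
      refine ⟨by rw [neg_mul, add_mul, one_mul, neg_add]; exact hts, by nlinarith⟩
    · rintro ⟨hts, ht⟩
      have ht' : t < 0 := by nlinarith
      rw [abs_of_neg ht']
      exact ⟨by rw [neg_mul, add_mul, one_mul, neg_add] at hts; exact hts, ht'⟩
  have hIoi : volume (s ∩ Ioi 0) = volume (s ∩ Ici 0) := by
    apply measure_congr
    rw [Filter.eventuallyEq_set]
    have : ∀ᵐ t : ℝ, t ≠ 0 := by
      rw [ae_iff]
      exact (measure_mono_null (fun t ht => by simpa using ht)
        (volume_singleton (a := (0:ℝ))))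
    filter_upwards [this] with t ht
    simp only [Set.mem_inter_iff, Set.mem_Ioi, Set.mem_Ici]
    exact ⟨fun ⟨u, v⟩ => ⟨u, v.le⟩, fun ⟨u, v⟩ => ⟨u, lt_of_le_of_ne v (Ne.symm ht)⟩⟩
  rw [hsplit, e1, e2, Real.volume_preimage_mul_left (ne_of_gt ha),
    Real.volume_preimage_mul_left (by intro hc; apply ne_of_gt hb; linarith), hIoi,
    abs_inv, abs_of_pos ha, abs_inv, abs_neg, abs_of_pos hb,
    ENNReal.ofReal_add (by positivity) (by positivity), add_mul]

private lemma map_pi_aux (m : ℕ) (f : Fin m → ℝ → ℝ) (hf : ∀ k, Measurable (f k))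
    (ν : Fin m → Measure ℝ) [∀ k, SigmaFinite (ν k)]
    (hmap : ∀ k, Measure.map (f k) volume = ν k) :
    Measure.map (fun (z : Fin m → ℝ) (k : Fin m) => f k (z k))
        (volume : Measure (Fin m → ℝ)) = Measure.pi ν := by
  refine (Measure.pi_eq fun s hs => ?_).symm
  have hΦ : Measurable (fun (z : Fin m → ℝ) (k : Fin m) => f k (z k)) :=
    measurable_pi_lambda _ fun k => (hf k).comp (measurable_pi_apply k)
  rw [Measure.map_apply hΦ (MeasurableSet.univ_pi hs)]
  have hpre : (fun (z : Fin m → ℝ) (k : Fin m) => f k (z k)) ⁻¹' (Set.pi Set.univ s)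
      = Set.pi Set.univ fun k => f k ⁻¹' s k := by
    ext z; simp [Set.mem_pi]
  rw [hpre, volume_pi_pi]
  exact Finset.prod_congr rfl fun k _ => by
    rw [← hmap k, Measure.map_apply (hf k) (hs k)]

private lemma pi_smul_aux (m : ℕ) (c : Fin m → NNReal) (ν : Fin m → Measure ℝ)
    [∀ k, SigmaFinite (ν k)] :
    Measure.pi (fun k => c k • ν k)
      = (∏ k, (c k : ℝ≥0∞)) • Measure.pi ν := by
  refine Measure.pi_eq fun s hs => ?_
  rw [Measure.smul_apply, Measure.pi_pi, smul_eq_mul, ← Finset.prod_mul_distrib]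
  exact Finset.prod_congr rfl fun k _ => by
    rw [show (c k • ν k) (s k) = (c k : ℝ≥0∞) * ν k (s k) from rfl]

private lemma vol_K_aux (m : ℕ) (ψ : Fin m → ℝ) (hψ : ∀ k, |ψ k| < 1) :
    volume {z : Fin m → ℝ | ∑ k, (|z k| - ψ k * z k) ≤ 1}
      = ENNReal.ofReal (∏ k, ((1 - ψ k)⁻¹ + (1 + ψ k)⁻¹))
        * Measure.pi (fun _ : Fin m => volume.restrict (Set.Ici (0:ℝ)))
            {y : Fin m → ℝ | ∑ k, y k ≤ 1} := by
  set A : Set (Fin m → ℝ) := {y | ∑ k, y k ≤ 1} with hA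
  have hAm : MeasurableSet A := measurableSet_le (by fun_prop) measurable_const
  set g : Fin m → ℝ := fun k => (1 - ψ k)⁻¹ + (1 + ψ k)⁻¹ with hg
  have hgpos : ∀ k, 0 ≤ g k := by
    intro k
    obtain ⟨u, v⟩ := abs_lt.mp (hψ k)
    have w1 : (0:ℝ) < 1 - ψ k := by linarith
    have w2 : (0:ℝ) < 1 + ψ k := by linarith
    positivity
  have hK : {z : Fin m → ℝ | ∑ k, (|z k| - ψ k * z k) ≤ 1}
      = (fun (z : Fin m → ℝ) (k : Fin m) => |z k| - ψ k * z k) ⁻¹' A := rfl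
  have hΦ : Measurable (fun (z : Fin m → ℝ) (k : Fin m) => |z k| - ψ k * z k) :=
    measurable_pi_lambda _ fun k => by fun_prop
  rw [hK, ← Measure.map_apply hΦ hAm,
    map_pi_aux m (fun k t => |t| - ψ k * t) (fun k => by fun_prop)
      (fun k => ((g k).toNNReal : NNReal) • volume.restrict (Set.Ici 0))
      (fun k => map_phi_aux (ψ k) (hψ k)),
    pi_smul_aux m (fun k => (g k).toNNReal), Measure.smul_apply, smul_eq_mul]
  congr 1
  rw [ENNReal.ofReal_prod_of_nonneg (fun k _ => hgpos k)]
  rfl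

/-- Volume of the anisotropic cross-polytope-like region:
for `ψ ∈ ℝᵐ` with `|ψ_k| < 1` for all `k`,
`vol {z : ∑_k (|z_k| - ψ_k z_k) ≤ 1} = (2^m / m!) ∏_k 1/(1 - ψ_k²)`. -/
theorem volume_anisotropic_cross_polytope (m : ℕ) (hm : 1 ≤ m)
    (ψ : Fin m → ℝ) (hψ : ∀ k, |ψ k| < 1) :
    volume {z : Fin m → ℝ | ∑ k, (|z k| - ψ k * z k) ≤ 1}
      = ENNReal.ofReal ((2 : ℝ) ^ m / (m.factorial : ℝ) * ∏ k, 1 / (1 - (ψ k) ^ 2)) := by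
  haveI : Nonempty (Fin m) := ⟨⟨0, hm⟩⟩
  set W := Measure.pi (fun _ : Fin m => volume.restrict (Set.Ici (0:ℝ)))
      {y : Fin m → ℝ | ∑ k, y k ≤ 1} with hW
  -- the ψ = 0 case
  have hzero := vol_K_aux m (fun _ => 0) (fun _ => by norm_num)
  have hset0 : {z : Fin m → ℝ | ∑ k, (|z k| - (fun _ : Fin m => (0:ℝ)) k * z k) ≤ 1}
      = {x : Fin m → ℝ | ∑ i, |x i| ≤ 1} := by ext z; simp
  have hc0 : ENNReal.ofReal
      (∏ k : Fin m, ((1 - (fun _ : Fin m => (0:ℝ)) k)⁻¹ + (1 + (fun _ : Fin m => (0:ℝ)) k)⁻¹))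
      = ENNReal.ofReal ((2:ℝ) ^ m) := by norm_num
  rw [hset0, hc0, ← hW] at hzero
  have hball : volume {x : Fin m → ℝ | ∑ i, |x i| ≤ 1}
      = ENNReal.ofReal ((2:ℝ) ^ m / (m.factorial : ℝ)) := by
    have h1 := MeasureTheory.volume_sum_rpow_le (Fin m) (p := 1) le_rfl 1
    norm_num at h1
    rw [Real.Gamma_nat_eq_factorial] at h1
    exact h1
  rw [hball] at hzero
  have key : ENNReal.ofReal ((2:ℝ) ^ m) * W
      = ENNReal.ofReal ((2:ℝ) ^ m) * ENNReal.ofReal (1 / (m.factorial : ℝ)) := by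
    rw [← hzero, ← ENNReal.ofReal_mul (by positivity), mul_one_div]
  have hWval : W = ENNReal.ofReal (1 / (m.factorial : ℝ)) :=
    (ENNReal.mul_right_inj (ENNReal.ofReal_pos.mpr (by positivity)).ne'
      ENNReal.ofReal_ne_top).mp key
  have hgpos : ∀ k : Fin m, 0 ≤ (1 - ψ k)⁻¹ + (1 + ψ k)⁻¹ := by
    intro k
    obtain ⟨u, v⟩ := abs_lt.mp (hψ k)
    have w1 : (0:ℝ) < 1 - ψ k := by linarith
    have w2 : (0:ℝ) < 1 + ψ k := by linarith
    positivity
  rw [vol_K_aux m ψ hψ, ← hW, hWval,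
    ← ENNReal.ofReal_mul (Finset.prod_nonneg fun k _ => hgpos k)]
  congr 1
  have hk2 : ∀ k ∈ Finset.univ, (1 - ψ k)⁻¹ + (1 + ψ k)⁻¹ = 2 * (1 / (1 - ψ k ^ 2)) := by
    intro k _
    obtain ⟨u, v⟩ := abs_lt.mp (hψ k)
    have w1 : (1:ℝ) - ψ k ≠ 0 := by intro hc; linarith
    have w2 : (1:ℝ) + ψ k ≠ 0 := by intro hc; linarith
    have w3 : (1:ℝ) - ψ k ^ 2 ≠ 0 := by
      intro hc
      have : (1:ℝ) - ψ k ^ 2 = (1 - ψ k) * (1 + ψ k) := by ring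
      rw [this] at hc
      rcases mul_eq_zero.mp hc with h' | h'
      · exact w1 h'
      · exact w2 h'
    field_simp
    ring
  rw [Finset.prod_congr rfl hk2, Finset.prod_mul_distrib, Finset.prod_const,
    Finset.card_univ, Fintype.card_fin]
  ring
end
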